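/- Let n and t be positive integers, and let I be an integer with ⌊(n+1)/2⌋ ≤ I ≤ n. Then C(t, 2I−n) = Σ_{i=⌊(n+1)/2⌋}^{n} (−1)^{I−i}·C(t, I−i)·C(t+2i−n−1, 2i−n). -/

import Mathlib

/-- The generalized binomial coefficient `C(a,b)` for integers `a`, `b`:
`C(a,b) = 0` if `b < 0`, and `C(a,b) = a(a-1)⋯(a-b+1)/b!` if `b ≥ 0`. -/
noncomputable def binom (a b : ℤ) : ℤ := if b < 0 then 0 else Ring.choose a b.toNat

lemma binom_of_neg {a b : ℤ} (h : b < 0) : binom a b = 0 := if_pos h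

lemma binom_zero_right (a : ℤ) : binom a 0 = 1 := by
  simp [binom, Ring.choose_zero_right]

lemma binom_natCast (a b : ℕ) : binom (a : ℤ) (b : ℤ) = (Nat.choose a b : ℤ) := by
  rw [binom, if_neg (by omega)]
  rw [show ((b : ℤ).toNat) = b by omega, Ring.choose_natCast]

lemma binom_zero_left_pos {j : ℤ} (hj : 0 < j) : binom 0 j = 0 := by
  have h0 : (0 : ℤ) = ((0 : ℕ) : ℤ) := rfl
  rw [binom, if_neg (by omega), h0, Ring.choose_natCast,
    Nat.choose_eq_zero_of_lt (by omega)]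

lemma binom_pascal (a k : ℤ) : binom (a + 1) k = binom a k + binom a (k - 1) := by
  rcases lt_trichotomy k 0 with hk | hk | hk
  · rw [binom_of_neg hk, binom_of_neg hk, binom_of_neg (by omega)]; ring
  · subst hk
    rw [binom_zero_right, binom_zero_right, binom_of_neg (by norm_num)]; ring
  · obtain ⟨m, rfl⟩ : ∃ m : ℕ, k = (m : ℤ) + 1 := ⟨(k - 1).toNat, by omega⟩
    have h1 : binom (a + 1) ((m : ℤ) + 1) = Ring.choose (a + 1) (m + 1) := by
      rw [binom, if_neg (by omega)]; congr 1 <;> omega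
    have h2 : binom a ((m : ℤ) + 1) = Ring.choose a (m + 1) := by
      rw [binom, if_neg (by omega)]; congr 1 <;> omega
    have h3 : binom a ((m : ℤ) + 1 - 1) = Ring.choose a m := by
      rw [binom, if_neg (by omega)]; congr 1 <;> omega
    rw [h1, h2, h3, Ring.choose_succ_succ]; ring

/-- The auxiliary sum. -/
noncomputable def binomS (t K : ℤ) : ℤ :=
  ∑ j ∈ Finset.Icc (0 : ℤ) K,
    (j.negOnePow : ℤ) * binom t j * binom (t + K - 2 * j - 1) (K - 2 * j)

lemma binomS_rec (t K : ℤ) (hK : 0 ≤ K) :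
    binomS (t + 1) (K + 1) = binomS t (K + 1) + binomS t K := by
  have key : ∀ j : ℤ,
      (j.negOnePow : ℤ) * binom (t + 1) j *
        binom (t + 1 + (K + 1) - 2 * j - 1) (K + 1 - 2 * j)
      = ((j.negOnePow : ℤ) * binom t j * binom (t + (K + 1) - 2 * j - 1) (K + 1 - 2 * j)
        + (j.negOnePow : ℤ) * binom t j * binom (t + K - 2 * j - 1) (K - 2 * j))
        + ((j.negOnePow : ℤ) * binom t j * binom (t + K - 2 * j - 1) (K - 2 * j - 1)
        + (j.negOnePow : ℤ) * binom t (j - 1) * binom (t + K + 1 - 2 * j) (K + 1 - 2 * j)) := by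
    intro j
    have e1 : t + 1 + (K + 1) - 2 * j - 1 = (t + K - 2 * j) + 1 := by ring
    have e2 : t + (K + 1) - 2 * j - 1 = t + K - 2 * j := by ring
    have e3 : t + K + 1 - 2 * j = (t + K - 2 * j) + 1 := by ring
    have hy : binom (t + K - 2 * j) (K - 2 * j)
        = binom (t + K - 2 * j - 1) (K - 2 * j) + binom (t + K - 2 * j - 1) (K - 2 * j - 1) := by
      have h := binom_pascal (t + K - 2 * j - 1) (K - 2 * j)
      rw [show t + K - 2 * j - 1 + 1 = t + K - 2 * j by ring] at h
      exact h
    rw [e1, e2, e3, binom_pascal (t + K - 2 * j) (K + 1 - 2 * j), binom_pascal t j,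
      show K + 1 - 2 * j - 1 = K - 2 * j by ring, hy]
    ring
  have step1 : binomS (t + 1) (K + 1)
      = (∑ j ∈ Finset.Icc (0 : ℤ) (K + 1),
          ((j.negOnePow : ℤ) * binom t j * binom (t + (K + 1) - 2 * j - 1) (K + 1 - 2 * j)
            + (j.negOnePow : ℤ) * binom t j * binom (t + K - 2 * j - 1) (K - 2 * j)))
        + (∑ j ∈ Finset.Icc (0 : ℤ) (K + 1),
          ((j.negOnePow : ℤ) * binom t j * binom (t + K - 2 * j - 1) (K - 2 * j - 1)
            + (j.negOnePow : ℤ) * binom t (j - 1) * binom (t + K + 1 - 2 * j) (K + 1 - 2 * j))) := by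
    rw [← Finset.sum_add_distrib]
    exact Finset.sum_congr rfl fun j _ => key j
  have hB : (∑ j ∈ Finset.Icc (0 : ℤ) (K + 1),
      (j.negOnePow : ℤ) * binom t j * binom (t + K - 2 * j - 1) (K - 2 * j)) = binomS t K := by
    rw [binomS]
    refine (Finset.sum_subset (Finset.Icc_subset_Icc_right (by omega)) ?_).symm
    intro j hj hj'
    simp only [Finset.mem_Icc] at hj hj'
    rw [binom_of_neg (b := K - 2 * j) (by omega), mul_zero]
  have hC : (∑ j ∈ Finset.Icc (0 : ℤ) (K + 1),
      ((j.negOnePow : ℤ) * binom t j * binom (t + K - 2 * j - 1) (K - 2 * j - 1)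
        + (j.negOnePow : ℤ) * binom t (j - 1) * binom (t + K + 1 - 2 * j) (K + 1 - 2 * j))) = 0 := by
    rw [Finset.sum_add_distrib]
    have hshift : (∑ j ∈ Finset.Icc (0 : ℤ) (K + 1),
        (j.negOnePow : ℤ) * binom t (j - 1) * binom (t + K + 1 - 2 * j) (K + 1 - 2 * j))
        = - ∑ j ∈ Finset.Icc (-1 : ℤ) K,
            (j.negOnePow : ℤ) * binom t j * binom (t + K - 2 * j - 1) (K - 2 * j - 1) := by
      rw [show (0 : ℤ) = -1 + 1 by ring, ← Finset.map_add_right_Icc (-1 : ℤ) K 1,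
        Finset.sum_map, ← Finset.sum_neg_distrib]
      refine Finset.sum_congr rfl fun j _ => ?_
      simp only [addRightEmbedding_apply]
      rw [Int.negOnePow_succ, show (j : ℤ) + 1 - 1 = j by ring,
        show t + K + 1 - 2 * (j + 1) = t + K - 2 * j - 1 by ring,
        show K + 1 - 2 * (j + 1) = K - 2 * j - 1 by ring]
      push_cast
      ring
    have hext1 : (∑ j ∈ Finset.Icc (0 : ℤ) (K + 1),
        (j.negOnePow : ℤ) * binom t j * binom (t + K - 2 * j - 1) (K - 2 * j - 1))
        = ∑ j ∈ Finset.Icc (-1 : ℤ) (K + 1),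
            (j.negOnePow : ℤ) * binom t j * binom (t + K - 2 * j - 1) (K - 2 * j - 1) := by
      refine Finset.sum_subset (Finset.Icc_subset_Icc_left (by omega)) ?_
      intro j hj hj'
      simp only [Finset.mem_Icc] at hj hj'
      rw [binom_of_neg (b := j) (by omega), mul_zero, zero_mul]
    have hext2 : (∑ j ∈ Finset.Icc (-1 : ℤ) K,
        (j.negOnePow : ℤ) * binom t j * binom (t + K - 2 * j - 1) (K - 2 * j - 1))
        = ∑ j ∈ Finset.Icc (-1 : ℤ) (K + 1),
            (j.negOnePow : ℤ) * binom t j * binom (t + K - 2 * j - 1) (K - 2 * j - 1) := by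
      refine Finset.sum_subset (Finset.Icc_subset_Icc_right (by omega)) ?_
      intro j hj hj'
      simp only [Finset.mem_Icc] at hj hj'
      rw [binom_of_neg (b := K - 2 * j - 1) (by omega), mul_zero]
    rw [hshift, hext1, hext2]
    ring
  rw [step1, Finset.sum_add_distrib, hB, hC, add_zero]
  rfl

lemma binomS_eq (k : ℕ) : ∀ t : ℤ, binomS t k = binom t k := by
  induction k with
  | zero =>
    intro t
    rw [binomS]
    simp only [Nat.cast_zero, Finset.Icc_self, Finset.sum_singleton]
    norm_num [binom_zero_right, Int.negOnePow_zero]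
  | succ k ih =>
    intro t
    induction t using Int.induction_on with
    | zero =>
      rw [binomS]
      rw [Finset.sum_eq_single (0 : ℤ)]
      · simp only [Int.negOnePow_zero, Units.val_one, one_mul, binom_zero_right]
        rw [show (0 : ℤ) + ((k : ℕ) + 1 : ℕ) - 2 * 0 - 1 = ((k : ℕ) : ℤ) by push_cast; ring,
          show (((k : ℕ) + 1 : ℕ) : ℤ) - 2 * 0 = (((k + 1 : ℕ)) : ℤ) by push_cast; ring,
          binom_natCast, Nat.choose_eq_zero_of_lt (by omega)]
        have : (0 : ℤ) < ((k + 1 : ℕ) : ℤ) := by push_cast; omega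
        rw [binom_zero_left_pos this]
        rfl
      · intro j hj hj0
        simp only [Finset.mem_Icc] at hj
        rw [binom_zero_left_pos (by omega), mul_zero, zero_mul]
      · intro h
        exact absurd (Finset.mem_Icc.mpr ⟨le_refl 0, by positivity⟩) h
    | succ i hi =>
      have hrec := binomS_rec (i : ℤ) (k : ℤ) (by positivity)
      have hcast : (((k : ℕ) + 1 : ℕ) : ℤ) = (k : ℤ) + 1 := by push_cast; ring
      rw [hcast] at hi ⊢
      rw [hrec, hi, show ((k : ℕ) : ℤ) + 1 = (k : ℤ) + 1 from rfl] at *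
      rw [binom_pascal, show (k : ℤ) + 1 - 1 = (k : ℤ) by ring]
      rw [ih]
    | pred i hi =>
      have hrec := binomS_rec (-(i : ℤ) - 1) (k : ℤ) (by positivity)
      have hcast : (((k : ℕ) + 1 : ℕ) : ℤ) = (k : ℤ) + 1 := by push_cast; ring
      rw [hcast] at hi ⊢
      rw [show -(i : ℤ) - 1 + 1 = -(i : ℤ) by ring] at hrec
      have h2 : binomS (-(i : ℤ) - 1) ((k : ℤ) + 1)
          = binomS (-(i : ℤ)) ((k : ℤ) + 1) - binomS (-(i : ℤ) - 1) (k : ℤ) := by omega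
      rw [h2, hi, ih]
      have hp := binom_pascal (-(i : ℤ) - 1) ((k : ℤ) + 1)
      rw [show -(i : ℤ) - 1 + 1 = -(i : ℤ) by ring,
        show (k : ℤ) + 1 - 1 = (k : ℤ) by ring] at hp
      omega

theorem binom_sum_identity (n t I : ℤ) (hn : 0 < n) (ht : 0 < t)
    (hI₁ : (n + 1) / 2 ≤ I) (hI₂ : I ≤ n) :
    binom t (2 * I - n) =
      ∑ i ∈ Finset.Icc ((n + 1) / 2) n,
        ((I - i).negOnePow : ℤ) * binom t (I - i) * binom (t + 2 * i - n - 1) (2 * i - n) := by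
  set m : ℤ := (n + 1) / 2 with hm
  have hm1 : 2 * m ≤ n + 1 := by omega
  have hm2 : n ≤ 2 * m := by omega
  set K : ℤ := 2 * I - n with hKdef
  have hK0 : 0 ≤ K := by omega
  have hIm : 0 ≤ I - m := by omega
  have hImK : I - m ≤ K := by omega
  -- reindex: i ↦ I - i
  have hre : (∑ i ∈ Finset.Icc m n,
      ((I - i).negOnePow : ℤ) * binom t (I - i) * binom (t + 2 * i - n - 1) (2 * i - n))
      = ∑ j ∈ Finset.Icc (I - n) (I - m),
          (j.negOnePow : ℤ) * binom t j * binom (t + K - 2 * j - 1) (K - 2 * j) := by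
    refine Finset.sum_nbij' (fun i => I - i) (fun j => I - j) ?_ ?_ ?_ ?_ ?_
    · intro a ha; simp only [Finset.mem_Icc] at ha ⊢; omega
    · intro a ha; simp only [Finset.mem_Icc] at ha ⊢; omega
    · intro a _; ring
    · intro a _; ring
    · intro a _
      rw [show t + K - 2 * (I - a) - 1 = t + 2 * a - n - 1 by rw [hKdef]; ring,
        show K - 2 * (I - a) = 2 * a - n by rw [hKdef]; ring]
  rw [hre]
  have h1 : (∑ j ∈ Finset.Icc (I - n) (I - m),
      (j.negOnePow : ℤ) * binom t j * binom (t + K - 2 * j - 1) (K - 2 * j))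
      = ∑ j ∈ Finset.Icc (0 : ℤ) (I - m),
          (j.negOnePow : ℤ) * binom t j * binom (t + K - 2 * j - 1) (K - 2 * j) := by
    refine (Finset.sum_subset (Finset.Icc_subset_Icc_left (by omega)) ?_).symm
    intro j hj hj'
    simp only [Finset.mem_Icc] at hj hj'
    rw [binom_of_neg (b := j) (by omega), mul_zero, zero_mul]
  have h2 : (∑ j ∈ Finset.Icc (0 : ℤ) K,
      (j.negOnePow : ℤ) * binom t j * binom (t + K - 2 * j - 1) (K - 2 * j))
      = ∑ j ∈ Finset.Icc (0 : ℤ) (I - m),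
          (j.negOnePow : ℤ) * binom t j * binom (t + K - 2 * j - 1) (K - 2 * j) := by
    refine (Finset.sum_subset (Finset.Icc_subset_Icc_right (by omega)) ?_).symm
    intro j hj hj'
    simp only [Finset.mem_Icc] at hj hj'
    rw [binom_of_neg (b := K - 2 * j) (by omega), mul_zero]
  rw [h1, ← h2]
  have hS := binomS_eq K.toNat t
  rw [show ((K.toNat : ℕ) : ℤ) = K by omega] at hS
  rw [← hS]
  rfl
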